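/- Let {U_k}_{k∈[t]} be unitaries on A⊗B defining γ-MUBs with d^{−γ/2} ≤ 1/(16 t d_B), where d = d_A d_B. For y ∈ [d_A] let F_y be the span of {U_k†|y⟩|b⟩ : k ∈ [t], b ∈ [d_B]}. Then for any x ≠ y in [d_A], any k₀ ∈ [t], and b₀ ∈ [d_B], the squared projection satisfies tr[Π_{F_y} U_{k₀}†|x⟩|b₀⟩⟨x|⟨b₀|U_{k₀}] ≤ 2√32·(t d_B)²·d^{−γ}. -/

import Mathlib

open Matrix
open scoped BigOperators

/-- The vector `U†|p⟩` in `ℂ^{d_A} ⊗ ℂ^{d_B}`, i.e. the column of `U†` indexed by the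
computational basis element `|p⟩ = |a⟩|b⟩`. -/
noncomputable def adjCol (dA dB : ℕ)
    (U : Matrix (Fin dA × Fin dB) (Fin dA × Fin dB) ℂ) (p : Fin dA × Fin dB) :
    EuclideanSpace ℂ (Fin dA × Fin dB) :=
  WithLp.toLp 2 (Uᴴ.mulVec (EuclideanSpace.single p (1 : ℂ)))

lemma inner_adjCol (dA dB : ℕ) (U V : Matrix (Fin dA × Fin dB) (Fin dA × Fin dB) ℂ)
    (p q : Fin dA × Fin dB) :
    (inner ℂ (adjCol dA dB U p) (adjCol dA dB V q) : ℂ) = (U * Vᴴ) p q := by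
  classical
  have hs : (EuclideanSpace.single p (1:ℂ) : (Fin dA × Fin dB) → ℂ) = Pi.single p 1 := by
    ext j; simp [EuclideanSpace.single_apply, Pi.single_apply]
  have hs' : (EuclideanSpace.single q (1:ℂ) : (Fin dA × Fin dB) → ℂ) = Pi.single q 1 := by
    ext j; simp [EuclideanSpace.single_apply, Pi.single_apply]
  simp only [adjCol, PiLp.inner_apply, RCLike.inner_apply, Matrix.mul_apply]
  rw [show (Uᴴ.mulVec (EuclideanSpace.single p (1:ℂ))) = Uᴴ.mulVec (Pi.single p 1) by rw [hs],
      show (Vᴴ.mulVec (EuclideanSpace.single q (1:ℂ))) = Vᴴ.mulVec (Pi.single q 1) by rw [hs']]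
  simp [Matrix.mulVec_single, Matrix.conjTranspose_apply, mul_comm]


set_option maxHeartbeats 1000000 in
/-- Let `{U_k}_{k∈[t]}` be unitaries on `A⊗B` defining `γ`-MUBs with
`d^{−γ/2} ≤ 1/(16 t d_B)` where `d = d_A d_B`.  For `y ∈ [d_A]` let `F_y` be the span
of `{U_k†|y⟩|b⟩ : k ∈ [t], b ∈ [d_B]}`.  Then for any `x ≠ y` in `[d_A]`, any
`k₀ ∈ [t]` and `b₀ ∈ [d_B]`, the squared norm of the orthogonal projection of
`U_{k₀}†|x⟩|b₀⟩` onto `F_y` (equivalently `tr[Π_{F_y} U_{k₀}†|x,b₀⟩⟨x,b₀|U_{k₀}]`)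
is at most `2√32·(t d_B)²·d^{−γ}`. -/
theorem stmt13 (dA dB t : ℕ) (hA : 0 < dA) (hB : 0 < dB) (ht : 0 < t) (γ : ℝ) (hγ : 0 < γ)
    (U : Fin t → Matrix (Fin dA × Fin dB) (Fin dA × Fin dB) ℂ)
    (hU : ∀ k, U k ∈ Matrix.unitaryGroup (Fin dA × Fin dB) ℂ)
    (hMUB : ∀ k k', k ≠ k' → ∀ p q : Fin dA × Fin dB,
      ‖(U k' * (U k)ᴴ) p q‖ ≤ (((dA : ℝ) * dB)) ^ (-(γ / 2)))
    (hsmall : (((dA : ℝ) * dB)) ^ (-(γ / 2)) ≤ 1 / (16 * t * dB))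
    (x y : Fin dA) (hxy : x ≠ y) (k₀ : Fin t) (b₀ : Fin dB) :
    ‖(Submodule.orthogonalProjectionOnto
        (Submodule.span ℂ (Set.range fun kb : Fin t × Fin dB =>
          adjCol dA dB (U kb.1) (y, kb.2)))
        (adjCol dA dB (U k₀) (x, b₀)) : EuclideanSpace ℂ (Fin dA × Fin dB))‖ ^ 2
      ≤ 2 * Real.sqrt 32 * ((t : ℝ) * dB) ^ 2 * (((dA : ℝ) * dB)) ^ (-γ) := by
  classical
  set ε : ℝ := ((dA : ℝ) * dB) ^ (-(γ / 2)) with hεdef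
  have hd : (0:ℝ) < (dA:ℝ) * dB := by positivity
  have hεpos : 0 < ε := Real.rpow_pos_of_pos hd _
  set w : Fin t × Fin dB → EuclideanSpace ℂ (Fin dA × Fin dB) :=
    fun kb : Fin t × Fin dB => adjCol dA dB (U kb.1) (y, kb.2) with hwdef
  set v : EuclideanSpace ℂ (Fin dA × Fin dB) := adjCol dA dB (U k₀) (x, b₀) with hvdef
  have hUU : ∀ k, U k * (U k)ᴴ = 1 := by
    intro k
    have := (Matrix.mem_unitaryGroup_iff).mp (hU k)
    simpa [Matrix.star_eq_conjTranspose] using this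
  have hdiag : ∀ i, (inner ℂ (w i) (w i) : ℂ) = 1 := by
    intro i
    rw [hwdef]
    simp only [inner_adjCol, hUU]
    simp [Matrix.one_apply]
  have hoff : ∀ i j : Fin t × Fin dB, i ≠ j → ‖(inner ℂ (w i) (w j) : ℂ)‖ ≤ ε := by
    intro i j hij
    rw [hwdef]
    simp only [inner_adjCol]
    by_cases hk : i.1 = j.1
    · have hb : i.2 ≠ j.2 := fun hb => hij (Prod.ext hk hb)
      rw [hk, hUU]
      have : ((1 : Matrix (Fin dA × Fin dB) (Fin dA × Fin dB) ℂ)) (y, i.2) (y, j.2) = 0 := by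
        simp [Matrix.one_apply, hb]
      rw [this]; simpa using hεpos.le
    · exact hMUB j.1 i.1 (Ne.symm hk) _ _
  have hcross : ∀ i : Fin t × Fin dB, ‖(inner ℂ (w i) v : ℂ)‖ ≤ ε := by
    intro i
    rw [hwdef, hvdef]
    simp only [inner_adjCol]
    by_cases hk : i.1 = k₀
    · rw [hk, hUU]
      have : ((1 : Matrix (Fin dA × Fin dB) (Fin dA × Fin dB) ℂ)) (y, i.2) (x, b₀) = 0 :=
        Matrix.one_apply_ne (fun h => hxy ((congrArg Prod.fst h).symm : x = y))
      rw [this]; simpa using hεpos.le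
    · exact hMUB k₀ i.1 (Ne.symm hk) _ _
  -- projection setup
  set F := Submodule.span ℂ (Set.range w) with hFdef
  set pv : EuclideanSpace ℂ (Fin dA × Fin dB) :=
    (Submodule.orthogonalProjectionOnto F v : EuclideanSpace ℂ (Fin dA × Fin dB)) with hpdef
  have hpF : pv ∈ F := SetLike.coe_mem _
  obtain ⟨c, hc⟩ := (Submodule.mem_span_range_iff_exists_fun ℂ).mp hpF
  set S : ℝ := ∑ i, ‖c i‖^2 with hSdef
  set T : ℝ := ∑ i, ‖c i‖ with hTdef
  have hSnn : 0 ≤ S := Finset.sum_nonneg fun i _ => sq_nonneg _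
  have hTnn : 0 ≤ T := Finset.sum_nonneg fun i _ => norm_nonneg _
  have horth : (inner ℂ (v - pv) pv : ℂ) = 0 := F.starProjection_inner_eq_zero v pv hpF
  have hpv : (inner ℂ pv v : ℂ) = ((‖pv‖^2 : ℝ) : ℂ) := by
    have h1 : (inner ℂ pv (v - pv) : ℂ) = 0 := by
      rw [← inner_conj_symm, horth, map_zero]
    have h2 : (inner ℂ pv v : ℂ) = inner ℂ pv pv := by
      have h3 : (inner ℂ pv v : ℂ) - inner ℂ pv pv = 0 := by rw [← inner_sub_right, h1]
      exact sub_eq_zero.mp h3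
    rw [h2, inner_self_eq_norm_sq_to_K]
    norm_cast
  have step1 : ‖pv‖^2 ≤ ε * T := by
    have h3 : (‖pv‖^2 : ℝ) = ‖(inner ℂ pv v : ℂ)‖ := by
      rw [hpv, Complex.norm_real, Real.norm_eq_abs, abs_of_nonneg (sq_nonneg ‖pv‖)]
    rw [h3, ← hc, sum_inner]
    have hbound : ∀ i ∈ (Finset.univ : Finset (Fin t × Fin dB)),
        ‖(inner ℂ (c i • w i) v : ℂ)‖ ≤ ε * ‖c i‖ := by
      intro i _
      rw [inner_smul_left, norm_mul, RCLike.norm_conj]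
      calc ‖c i‖ * ‖(inner ℂ (w i) v : ℂ)‖ ≤ ‖c i‖ * ε :=
            mul_le_mul_of_nonneg_left (hcross i) (norm_nonneg _)
        _ = ε * ‖c i‖ := mul_comm _ _
    calc ‖∑ i, (inner ℂ (c i • w i) v : ℂ)‖
        ≤ ∑ i, ‖(inner ℂ (c i • w i) v : ℂ)‖ := norm_sum_le _ _
      _ ≤ ∑ i, ε * ‖c i‖ := Finset.sum_le_sum hbound
      _ = ε * T := by rw [hTdef, Finset.mul_sum]
  have expand : (‖pv‖^2 : ℝ) =
      ∑ i, ∑ j, ((starRingEnd ℂ) (c i) * (c j * inner ℂ (w i) (w j))).re := by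
    have h4 : (inner ℂ pv pv : ℂ)
        = ∑ i, ∑ j, (starRingEnd ℂ) (c i) * (c j * inner ℂ (w i) (w j)) := by
      conv_lhs => rw [← hc]
      simp_rw [sum_inner, inner_sum, inner_smul_left, inner_smul_right]
    have h4' : (‖pv‖^2 : ℝ) = (inner ℂ pv pv : ℂ).re := by
      rw [inner_self_eq_norm_sq_to_K]
      norm_cast
    rw [h4', h4]
    simp_rw [Complex.re_sum]
  have hterm : ∀ i j : Fin t × Fin dB,
      (if i = j then ‖c i‖^2 + ε * (‖c i‖ * ‖c j‖) else 0) - ε * (‖c i‖ * ‖c j‖)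
        ≤ ((starRingEnd ℂ) (c i) * (c j * inner ℂ (w i) (w j))).re := by
    intro i j
    by_cases h : i = j
    · subst h
      have h5 : ((starRingEnd ℂ) (c i) * (c i * inner ℂ (w i) (w i))).re = ‖c i‖^2 := by
        rw [hdiag i, mul_one, RCLike.conj_mul]
        norm_cast
      rw [h5, if_pos rfl]
      linarith
    · simp only [if_neg h, zero_sub]
      have h6 : ‖(starRingEnd ℂ) (c i) * (c j * inner ℂ (w i) (w j))‖
          ≤ ‖c i‖ * ‖c j‖ * ε := by
        rw [norm_mul, norm_mul, RCLike.norm_conj, mul_assoc]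
        refine mul_le_mul_of_nonneg_left ?_ (norm_nonneg _)
        exact mul_le_mul_of_nonneg_left (hoff i j h) (norm_nonneg _)
      have h7 := neg_abs_le ((starRingEnd ℂ) (c i) * (c j * inner ℂ (w i) (w j))).re
      have h8 := Complex.abs_re_le_norm ((starRingEnd ℂ) (c i) * (c j * inner ℂ (w i) (w j)))
      have h9 : ‖c i‖ * ‖c j‖ * ε = ε * (‖c i‖ * ‖c j‖) := by ring
      linarith
  have step2 : S + ε * S - ε * T^2 ≤ ‖pv‖^2 := by
    rw [expand]
    have hle : ∑ i : Fin t × Fin dB, ∑ j : Fin t × Fin dB,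
        ((if i = j then ‖c i‖^2 + ε * (‖c i‖ * ‖c j‖) else 0) - ε * (‖c i‖ * ‖c j‖))
        ≤ ∑ i, ∑ j, ((starRingEnd ℂ) (c i) * (c j * inner ℂ (w i) (w j))).re :=
      Finset.sum_le_sum fun i _ => Finset.sum_le_sum fun j _ => hterm i j
    refine le_trans (le_of_eq ?_) hle
    have e2 : ∑ i : Fin t × Fin dB, ∑ j : Fin t × Fin dB, ε * (‖c i‖ * ‖c j‖)
        = ε * T^2 := by
      simp_rw [← Finset.mul_sum, ← Finset.sum_mul]
      rw [hTdef]
      ring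
    have e1 : ∑ i : Fin t × Fin dB, ∑ j : Fin t × Fin dB,
        (if i = j then ‖c i‖^2 + ε * (‖c i‖ * ‖c j‖) else 0) = S + ε * S := by
      have e1i : ∀ i : Fin t × Fin dB, (∑ j : Fin t × Fin dB,
          if i = j then ‖c i‖^2 + ε * (‖c i‖ * ‖c j‖) else 0)
          = ‖c i‖^2 + ε * ‖c i‖^2 := by
        intro i
        rw [Finset.sum_ite_eq, if_pos (Finset.mem_univ i)]
        ring
      rw [Finset.sum_congr rfl fun i _ => e1i i, Finset.sum_add_distrib,
        ← Finset.mul_sum, hSdef]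
    calc S + ε * S - ε * T^2
        = (∑ i : Fin t × Fin dB, ∑ j : Fin t × Fin dB,
            (if i = j then ‖c i‖^2 + ε * (‖c i‖ * ‖c j‖) else 0))
          - ∑ i : Fin t × Fin dB, ∑ j : Fin t × Fin dB, ε * (‖c i‖ * ‖c j‖) := by
          rw [e1, e2]
      _ = _ := by
          rw [← Finset.sum_sub_distrib]
          exact Finset.sum_congr rfl fun i _ => (Finset.sum_sub_distrib _ _).symm
  have hcard : ((Finset.univ : Finset (Fin t × Fin dB)).card : ℝ) = (t : ℝ) * dB := by
    simp [Finset.card_univ]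
  have hT2 : T^2 ≤ ((t:ℝ) * dB) * S := by
    have h9 := Finset.sum_mul_sq_le_sq_mul_sq Finset.univ
      (fun _ : Fin t × Fin dB => (1:ℝ)) (fun i => ‖c i‖)
    simp only [one_mul, one_pow, Finset.sum_const, nsmul_eq_mul, mul_one] at h9
    rw [hTdef, hSdef]
    calc (∑ i, ‖c i‖)^2 ≤ ((Finset.univ : Finset (Fin t × Fin dB)).card : ℝ)
          * ∑ i, ‖c i‖^2 := h9
      _ = ((t:ℝ) * dB) * ∑ i, ‖c i‖^2 := by rw [hcard]
  have ht1 : (1:ℝ) ≤ (t:ℝ) := by exact_mod_cast ht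
  have hB1 : (1:ℝ) ≤ (dB:ℝ) := by exact_mod_cast hB
  have htB0 : (0:ℝ) ≤ (t:ℝ) * dB := by positivity
  have hn1 : (1:ℝ) ≤ (t:ℝ) * dB :=
    le_trans ht1 (le_mul_of_one_le_right (by linarith) hB1)
  have hεn : ε * ((t:ℝ) * dB) ≤ 1/16 := by
    have h10 : (0:ℝ) < (t:ℝ) * dB := by positivity
    calc ε * ((t:ℝ) * dB) ≤ (1 / (16 * t * dB)) * ((t:ℝ) * dB) :=
          mul_le_mul_of_nonneg_right hsmall h10.le
      _ = 1/16 := by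
          have hne : (16:ℝ) * t * dB ≠ 0 := by positivity
          field_simp
  have step2' : S * (15/16) ≤ ‖pv‖^2 := by
    have h11 : ε * T^2 ≤ ε * (((t:ℝ) * dB) * S) := mul_le_mul_of_nonneg_left hT2 hεpos.le
    have h12 : (ε * ((t:ℝ) * dB)) * S ≤ (1/16) * S := mul_le_mul_of_nonneg_right hεn hSnn
    have h13 : ε * (((t:ℝ) * dB) * S) = (ε * ((t:ℝ) * dB)) * S := by ring
    have h14 : (0:ℝ) ≤ ε * S := mul_nonneg hεpos.le hSnn
    linarith
  have final : ‖pv‖^2 ≤ (16/15) * ((t:ℝ) * dB) * ε^2 := by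
    rcases eq_or_lt_of_le (sq_nonneg ‖pv‖) with hz | hppos
    · rw [← hz]; positivity
    · have h13 : (‖pv‖^2)^2 ≤ (ε * T)^2 := pow_le_pow_left₀ (sq_nonneg _) step1 2
      have h14 : ε^2 * T^2 ≤ ε^2 * (((t:ℝ) * dB) * S) :=
        mul_le_mul_of_nonneg_left hT2 (sq_nonneg ε)
      have h15 : S ≤ (16/15) * ‖pv‖^2 := by linarith
      have hchain : ‖pv‖^2 * ‖pv‖^2 ≤ ((16/15) * ((t:ℝ) * dB) * ε^2) * ‖pv‖^2 := by
        calc ‖pv‖^2 * ‖pv‖^2 = (‖pv‖^2)^2 := by ring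
          _ ≤ (ε * T)^2 := h13
          _ = ε^2 * T^2 := by ring
          _ ≤ ε^2 * (((t:ℝ) * dB) * S) := h14
          _ ≤ ε^2 * (((t:ℝ) * dB) * ((16/15) * ‖pv‖^2)) :=
              mul_le_mul_of_nonneg_left (mul_le_mul_of_nonneg_left h15 htB0) (sq_nonneg ε)
          _ = ((16/15) * ((t:ℝ) * dB) * ε^2) * ‖pv‖^2 := by ring
      exact le_of_mul_le_mul_right hchain hppos
  have hsq5 : (5:ℝ) ≤ Real.sqrt 32 := by
    nlinarith [Real.sq_sqrt (by norm_num : (0:ℝ) ≤ 32), Real.sqrt_nonneg 32]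
  have hε2 : ε^2 = ((dA:ℝ) * dB) ^ (-γ) := by
    rw [hεdef, ← Real.rpow_natCast (((dA:ℝ) * dB) ^ (-(γ/2))) 2,
      ← Real.rpow_mul hd.le]
    norm_num
  rw [← hε2]
  have h20 : (16/15:ℝ) * ((t:ℝ) * dB) ≤ 2 * Real.sqrt 32 * ((t:ℝ) * dB)^2 := by
    have ha : ((t:ℝ) * dB) ≤ ((t:ℝ) * dB)^2 := by
      calc ((t:ℝ) * dB) = ((t:ℝ) * dB) * 1 := by ring
        _ ≤ ((t:ℝ) * dB) * ((t:ℝ) * dB) := mul_le_mul_of_nonneg_left hn1 htB0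
        _ = ((t:ℝ) * dB)^2 := by ring
    have hb3 := mul_nonneg (sub_nonneg.mpr hsq5) (sq_nonneg ((t:ℝ) * dB))
    nlinarith [htB0]
  calc ‖pv‖^2 ≤ (16/15) * ((t:ℝ) * dB) * ε^2 := final
    _ ≤ (2 * Real.sqrt 32 * ((t:ℝ) * dB)^2) * ε^2 :=
        mul_le_mul_of_nonneg_right h20 (sq_nonneg ε)
    _ = 2 * Real.sqrt 32 * ((t:ℝ) * dB)^2 * ε^2 := by ring
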